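/- There exists a set A ⊆ [0,1]^2 ⊆ ℝ^2 (Euclidean plane) with Hausdorff dimension equal to 2 such that both coordinate projections restricted to A are injective, i.e., no two distinct points of A share the same first coordinate and no two distinct points of A share the same second coordinate. -/

import Mathlib

open MeasureTheory

open Set Cardinal Ordinal Function
open scoped ENNReal NNReal

section Stmt17Aux



lemma cont_le_mk_of_pos {s : Set ℝ} (hs : MeasurableSet s) (h : 0 < volume s) :
    𝔠 ≤ #s := by
  obtain ⟨K, hKs, hKc, hK⟩ := hs.exists_lt_isCompact h
  have hKunc : ¬ K.Countable := by
    intro hc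
    simp [hc.measure_zero volume] at hK
  obtain ⟨f, hfr, -, hfi⟩ :=
    hKc.isClosed.exists_nat_bool_injection_of_not_countable hKunc
  have : #(ℕ → Bool) ≤ #s := by
    refine mk_le_of_injective (f := fun x => (⟨f x, hKs (hfr ⟨x, rfl⟩)⟩ : s)) ?_
    intro a b hab
    exact hfi (congrArg Subtype.val hab)
  calc 𝔠 = 2 ^ ℵ₀ := two_power_aleph0.symm
    _ = #(ℕ → Bool) := by
        rw [← Cardinal.mk_bool, ← Cardinal.power_def, Cardinal.mk_eq_aleph0 ℕ]
    _ ≤ #s := this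
lemma exists_point {C : Set (ℝ × ℝ)} (hC : MeasurableSet C) (hpos : 0 < volume C)
    {X Y : Set ℝ} (hX : #X < 𝔠) (hY : #Y < 𝔠) :
    ∃ p ∈ C, p.1 ∉ X ∧ p.2 ∉ Y := by
  have hprod : (volume : Measure (ℝ × ℝ)) = (volume : Measure ℝ).prod volume :=
    Measure.volume_eq_prod ℝ ℝ
  have hmeasfun : Measurable fun x : ℝ => volume (Prod.mk x ⁻¹' C) :=
    measurable_measure_prodMk_left hC
  set S := {x : ℝ | 0 < volume (Prod.mk x ⁻¹' C)} with hS
  have hSmeas : MeasurableSet S := measurableSet_lt measurable_const hmeasfun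
  have hSpos : 0 < volume S := by
    rw [pos_iff_ne_zero]
    intro h0
    have hae : (fun x => volume (Prod.mk x ⁻¹' C)) =ᵐ[volume] 0 := by
      rw [Filter.EventuallyEq, ae_iff]
      refine measure_mono_null ?_ h0
      intro x hx
      simp only [hS, mem_setOf_eq, pos_iff_ne_zero]
      exact hx
    have : (volume : Measure ℝ).prod volume C = 0 := (Measure.measure_prod_null hC).2 hae
    rw [← hprod] at this
    exact hpos.ne' this
  have hSX : ∃ x ∈ S, x ∉ X := by
    rw [← not_subset]
    intro hsub
    exact absurd ((cont_le_mk_of_pos hSmeas hSpos).trans (mk_le_mk_of_subset hsub))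
      (not_le.2 hX)
  obtain ⟨x, hxS, hxX⟩ := hSX
  have hsec : MeasurableSet (Prod.mk x ⁻¹' C) := measurable_prodMk_left hC
  have hsecpos : 0 < volume (Prod.mk x ⁻¹' C) := hxS
  have hSY : ∃ y ∈ Prod.mk x ⁻¹' C, y ∉ Y := by
    rw [← not_subset]
    intro hsub
    exact absurd ((cont_le_mk_of_pos hsec hsecpos).trans (mk_le_mk_of_subset hsub))
      (not_le.2 hY)
  obtain ⟨y, hyC, hyY⟩ := hSY
  exact ⟨(x, y), hyC, hxX, hyY⟩
lemma card_closeds_le : #{C : Set (ℝ × ℝ) // IsClosed C ∧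
    C ⊆ Icc (0:ℝ) 1 ×ˢ Icc (0:ℝ) 1 ∧ 0 < volume C} ≤ 𝔠 := by
  obtain ⟨b, hbc, -, hbasis⟩ := TopologicalSpace.exists_countable_basis (ℝ × ℝ)
  set 𝒦 := {C : Set (ℝ × ℝ) // IsClosed C ∧
    C ⊆ Icc (0:ℝ) 1 ×ˢ Icc (0:ℝ) 1 ∧ 0 < volume C}
  have hinj : Injective (fun C : 𝒦 => {s : b | (s : Set (ℝ × ℝ)) ⊆ (C : Set (ℝ × ℝ))ᶜ}) := by
    intro C D h
    have h' : ∀ s (hs : s ∈ b), (s ⊆ (C : Set (ℝ × ℝ))ᶜ ↔ s ⊆ (D : Set (ℝ × ℝ))ᶜ) := by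
      intro s hs
      have := Set.ext_iff.1 h ⟨s, hs⟩
      simpa using this
    have hco : ∀ E : 𝒦, (E : Set (ℝ × ℝ))ᶜ =
        ⋃₀ {s ∈ b | s ⊆ (E : Set (ℝ × ℝ))ᶜ} := fun E =>
      hbasis.open_eq_sUnion' E.2.1.isOpen_compl
    have hsep : {s ∈ b | s ⊆ (C : Set (ℝ × ℝ))ᶜ} = {s ∈ b | s ⊆ (D : Set (ℝ × ℝ))ᶜ} := by
      ext s
      exact ⟨fun ⟨h1, h2⟩ => ⟨h1, (h' s h1).1 h2⟩, fun ⟨h1, h2⟩ => ⟨h1, (h' s h1).2 h2⟩⟩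
    have : (C : Set (ℝ × ℝ))ᶜ = (D : Set (ℝ × ℝ))ᶜ := by rw [hco C, hco D, hsep]
    exact Subtype.ext (compl_injective this)
  calc #𝒦 ≤ #(Set b) := mk_le_of_injective hinj
    _ = 2 ^ #b := mk_set
    _ ≤ 2 ^ ℵ₀ := power_le_power_left two_ne_zero (mk_le_aleph0_iff.2 hbc.to_subtype)
    _ = 𝔠 := two_power_aleph0
namespace Stmt17

def Box : Set (ℝ × ℝ) := Icc (0:ℝ) 1 ×ˢ Icc (0:ℝ) 1

lemma boxClosed : IsClosed Box := isClosed_Icc.prod isClosed_Icc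

lemma boxVol : volume Box = 1 := by
  rw [Box, Measure.volume_eq_prod, Measure.prod_prod, Real.volume_Icc]
  norm_num

abbrev Kfam : Type := {C : Set (ℝ × ℝ) // IsClosed C ∧ C ⊆ Box ∧ 0 < volume C}

instance : Nonempty Kfam :=
  ⟨⟨Box, boxClosed, subset_rfl, by rw [boxVol]; norm_num⟩⟩

def I : Type := (Cardinal.continuum.{0}.ord).ToType

noncomputable instance : LinearOrder I :=
  inferInstanceAs (LinearOrder (Cardinal.continuum.{0}.ord).ToType)
instance : WellFoundedLT I :=
  inferInstanceAs (WellFoundedLT (Cardinal.continuum.{0}.ord).ToType)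
instance : IsWellOrder I (· < ·) := isWellOrder_lt

lemma mk_I : #I = 𝔠 := mk_ord_toType 𝔠

lemma mk_Iio_lt (a : I) : #{b : I // b < a} < 𝔠 := by
  have h1 : #{b : I // b < a} = (typein (α := I) (· < ·) a).card := (card_typein _).symm
  rw [h1, ← Cardinal.lt_ord]
  have := typein_lt_type (α := I) (· < ·) a
  rwa [show type (α := I) (· < ·) = Cardinal.continuum.{0}.ord from type_toType _] at this

noncomputable def g : I → Kfam :=
  invFun (Classical.choice (α := Kfam ↪ I) (by
    rw [← le_def, mk_I]; exact card_closeds_le))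

lemma gsurj : Surjective g :=
  invFun_surjective (Classical.choice (α := Kfam ↪ I) _).injective

lemma key : ∀ (a : I) (IH : ∀ b : I, b < a → ℝ × ℝ),
    ∃ p, p ∈ (g a).1 ∧
      p.1 ∉ {x : ℝ | ∃ b : I, ∃ h : b < a, (IH b h).1 = x} ∧
      p.2 ∉ {y : ℝ | ∃ b : I, ∃ h : b < a, (IH b h).2 = y} := by
  intro a IH
  have hX : #{x : ℝ | ∃ b : I, ∃ h : b < a, (IH b h).1 = x} < 𝔠 := by
    refine lt_of_le_of_lt (mk_le_of_surjective (f := fun b : {b : I // b < a} =>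
      (⟨(IH b.1 b.2).1, ⟨b.1, b.2, rfl⟩⟩ : {x : ℝ | ∃ b : I, ∃ h : b < a, (IH b h).1 = x}))
      ?_) (mk_Iio_lt a)
    rintro ⟨x, b, hb, rfl⟩
    exact ⟨⟨b, hb⟩, rfl⟩
  have hY : #{y : ℝ | ∃ b : I, ∃ h : b < a, (IH b h).2 = y} < 𝔠 := by
    refine lt_of_le_of_lt (mk_le_of_surjective (f := fun b : {b : I // b < a} =>
      (⟨(IH b.1 b.2).2, ⟨b.1, b.2, rfl⟩⟩ : {y : ℝ | ∃ b : I, ∃ h : b < a, (IH b h).2 = y}))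
      ?_) (mk_Iio_lt a)
    rintro ⟨y, b, hb, rfl⟩
    exact ⟨⟨b, hb⟩, rfl⟩
  exact exists_point (g a).2.1.measurableSet (g a).2.2.2 hX hY

noncomputable def f : I → ℝ × ℝ :=
  WellFoundedLT.fix (fun a IH => Classical.choose (key a IH))

lemma fspec (a : I) : f a ∈ (g a).1 ∧
    (f a).1 ∉ {x : ℝ | ∃ b : I, ∃ h : b < a, (f b).1 = x} ∧
    (f a).2 ∉ {y : ℝ | ∃ b : I, ∃ h : b < a, (f b).2 = y} := by
  have : f a = Classical.choose (key a (fun b _ => f b)) :=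
    WellFoundedLT.fix_eq (fun a IH => Classical.choose (key a IH)) a
  rw [this]
  exact Classical.choose_spec (key a (fun b _ => f b))

lemma exists_A_prod : ∃ A : Set (ℝ × ℝ),
    A ⊆ Icc (0:ℝ) 1 ×ˢ Icc (0:ℝ) 1 ∧
    Set.InjOn Prod.fst A ∧ Set.InjOn Prod.snd A ∧ volume A ≠ 0 := by
  refine ⟨range f, ?_, ?_, ?_, ?_⟩
  · rintro p ⟨a, rfl⟩
    exact (g a).2.2.1 (fspec a).1
  · rintro p ⟨a, rfl⟩ q ⟨c, rfl⟩ hpq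
    rcases lt_trichotomy a c with h | h | h
    · exact absurd ⟨a, h, hpq⟩ (fspec c).2.1
    · rw [h]
    · exact absurd ⟨c, h, hpq.symm⟩ (fspec a).2.1
  · rintro p ⟨a, rfl⟩ q ⟨c, rfl⟩ hpq
    rcases lt_trichotomy a c with h | h | h
    · exact absurd ⟨a, h, hpq⟩ (fspec c).2.2
    · rw [h]
    · exact absurd ⟨c, h, hpq.symm⟩ (fspec a).2.2
  · intro hnull
    obtain ⟨N, hsub, hNmeas, hNnull⟩ := exists_measurable_superset_of_null hnull
    have hT : volume (Box \ N) = 1 := by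
      rw [measure_diff_null hNnull, boxVol]
    have hTpos : (0:ENNReal) < volume (Box \ N) := by rw [hT]; norm_num
    obtain ⟨K, hKsub, hKcomp, hKpos⟩ :=
      (boxClosed.measurableSet.diff hNmeas).exists_lt_isCompact hTpos
    obtain ⟨a, ha⟩ := gsurj ⟨K, hKcomp.isClosed, hKsub.trans diff_subset, hKpos⟩
    have hfa : f a ∈ K := by
      have := (fspec a).1
      rw [ha] at this
      exact this
    exact (hKsub hfa).2 (hsub ⟨a, rfl⟩)

end Stmt17
end Stmt17Aux

open Stmt17 in
/-- There is a set `A ⊆ [0,1]² ⊆ ℝ²` (Euclidean plane) of Hausdorff dimension `2` such that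
both coordinate projections restricted to `A` are injective. -/
theorem stmt_17 :
    ∃ A : Set (EuclideanSpace ℝ (Fin 2)),
      (∀ x ∈ A, ∀ i : Fin 2, x i ∈ Set.Icc (0 : ℝ) 1) ∧
      dimH A = 2 ∧
      ∀ i : Fin 2, Set.InjOn (fun x : EuclideanSpace ℝ (Fin 2) => x i) A := by
  obtain ⟨A₀, hbox, hinj1, hinj2, hvol⟩ := exists_A_prod
  set e : (Fin 2 → ℝ) ≃ᵐ ℝ × ℝ := MeasurableEquiv.finTwoArrow with he
  set Api : Set (Fin 2 → ℝ) := e ⁻¹' A₀ with hApi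
  set L : EuclideanSpace ℝ (Fin 2) ≃L[ℝ] (Fin 2 → ℝ) := EuclideanSpace.equiv (Fin 2) ℝ with hL
  set A : Set (EuclideanSpace ℝ (Fin 2)) := L ⁻¹' Api with hA
  have hmem : ∀ x : EuclideanSpace ℝ (Fin 2), x ∈ A ↔ (x 0, x 1) ∈ A₀ := by
    intro x
    rfl
  have hApivol : volume Api = volume A₀ := by
    rw [hApi, ← MeasurableEquiv.map_apply e A₀, (volume_preserving_finTwoArrow ℝ).map_eq]
  refine ⟨A, ?_, ?_, ?_⟩
  · intro x hx i
    have h := hbox ((hmem x).1 hx)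
    fin_cases i
    · exact h.1
    · exact h.2
  · have hupper : dimH A ≤ 2 := by
      have := Real.dimH_univ_eq_finrank (EuclideanSpace ℝ (Fin 2))
      rw [finrank_euclideanSpace_fin] at this
      calc dimH A ≤ dimH (univ : Set (EuclideanSpace ℝ (Fin 2))) := dimH_mono (subset_univ _)
        _ = 2 := by rw [this]; norm_num
    have hlower : (2:ℝ≥0∞) ≤ dimH A := by
      have hdim : dimH A = dimH Api := by
        rw [hA, L.dimH_preimage]
      rw [hdim]
      have h2 : μH[((2:ℝ≥0):ℝ)] Api ≠ 0 := by
        have hcast : ((2:ℝ≥0):ℝ) = ((Fintype.card (Fin 2) : ℕ) : ℝ) := by norm_num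
        rw [hcast, hausdorffMeasure_pi_real, hApivol]
        exact hvol
      have := le_dimH_of_hausdorffMeasure_ne_zero h2
      simpa using this
    exact le_antisymm hupper hlower
  · intro i
    intro x hx y hy hxy
    simp only at hxy
    have hpx : (x 0, x 1) ∈ A₀ := (hmem x).1 hx
    have hpy : (y 0, y 1) ∈ A₀ := (hmem y).1 hy
    have hpair : (x 0, x 1) = (y 0, y 1) := by
      fin_cases i
      · exact hinj1 hpx hpy hxy
      · exact hinj2 hpx hpy hxy
    have h0 : x 0 = y 0 := congrArg Prod.fst hpair
    have h1 : x 1 = y 1 := congrArg Prod.snd hpair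
    ext j
    fin_cases j
    · exact h0
    · exact h1
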